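/- Let S be a Cu-semigroup, let e be a full element of S, and let r ∈ (0,∞). If x, y ∈ S satisfy λ(x) + r·λ(e) ≤ λ(y) for every λ ∈ F(S), then y is full. -/

import Mathlib

open scoped ENNReal

/-- `x' ≪ x`: for every increasing sequence whose supremum is `≥ x`,
some term of the sequence dominates `x'`. -/
def CuWayBelow {S : Type*} [Preorder S] (x' x : S) : Prop :=
  ∀ f : ℕ → S, Monotone f → ∀ s : S, IsLUB (Set.range f) s → x ≤ s → ∃ n, x' ≤ f n

/-- A `Cu`-semigroup: a partially ordered abelian monoid whose least element is `0`,
satisfying the axioms (O1)–(O4). -/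
class CuSemigroup (S : Type*) extends AddCommMonoid S, PartialOrder S, IsOrderedAddMonoid S where
  zero_le : ∀ x : S, 0 ≤ x
  O1 : ∀ f : ℕ → S, Monotone f → ∃ s : S, IsLUB (Set.range f) s
  O2 : ∀ x : S, ∃ f : ℕ → S, (∀ n, CuWayBelow (f n) (f (n + 1))) ∧ IsLUB (Set.range f) x
  O3 : ∀ {x' x y' y : S}, CuWayBelow x' x → CuWayBelow y' y → CuWayBelow (x' + y') (x + y)
  O4 : ∀ f g : ℕ → S, Monotone f → Monotone g → ∀ a b : S,
      IsLUB (Set.range f) a → IsLUB (Set.range g) b →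
      IsLUB (Set.range fun n => f n + g n) (a + b)

/-- A functional on a `Cu`-semigroup: a map `S → [0,∞]` which is additive, order
preserving, sends `0` to `0`, and preserves suprema of increasing sequences. -/
structure IsCuFunctional {S : Type*} [CuSemigroup S] (Λ : S → ℝ≥0∞) : Prop where
  map_zero : Λ 0 = 0
  map_add : ∀ x y : S, Λ (x + y) = Λ x + Λ y
  mono : Monotone Λ
  map_sup : ∀ f : ℕ → S, Monotone f → ∀ s : S, IsLUB (Set.range f) s → Λ s = ⨆ n, Λ (f n)

/-- `x` is full if `∞ · x = sup_n (n • x)` is the largest element of `S`. -/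
def IsFull {S : Type*} [CuSemigroup S] (x : S) : Prop :=
  ∀ s : S, IsLUB (Set.range fun n : ℕ => n • x) s → ∀ y : S, y ≤ s

/-- `F_w(S) ≠ ∅`: there exists a functional normalized at `w`. -/
def FNormNonempty {S : Type*} [CuSemigroup S] (w : S) : Prop :=
  ∃ Λ : S → ℝ≥0∞, IsCuFunctional Λ ∧ Λ w = 1

/-- The rank ratio `ρ(x, y)`: the infimum of all `r ∈ (0,∞)` with
`λ(x) ≤ r·λ(y)` for every functional `λ`; `∞` if there is no such `r`. -/
noncomputable def rankRatio {S : Type*} [CuSemigroup S] (x y : S) : ℝ≥0∞ :=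
  sInf {r : ℝ≥0∞ | 0 < r ∧ r ≠ ⊤ ∧ ∀ Λ : S → ℝ≥0∞, IsCuFunctional Λ → Λ x ≤ r * Λ y}

/-- `S` has `r`-comparison relative to `w`. -/
def HasRComparison {S : Type*} [CuSemigroup S] (r : ℝ≥0∞) (w : S) : Prop :=
  ∀ x y : S, (∀ Λ : S → ℝ≥0∞, IsCuFunctional Λ → Λ x + r * Λ w ≤ Λ y) → x ≤ y

/-- The radius of comparison of `S` relative to `w`: the infimum of all `r ∈ (0,∞)`
for which `S` has `r`-comparison relative to `w`; `∞` if there is no such `r`. -/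
noncomputable def rc {S : Type*} [CuSemigroup S] (w : S) : ℝ≥0∞ :=
  sInf {r : ℝ≥0∞ | 0 < r ∧ r ≠ ⊤ ∧ HasRComparison r w}

/-- Lemma (LemFuRCDf): if `e` is full, `r ∈ (0,∞)`, and `x, y ∈ S` satisfy
`λ(x) + r·λ(e) ≤ λ(y)` for every functional `λ`, then `y` is full. -/
theorem stmt13 {S : Type*} [CuSemigroup S] (e : S) (he : IsFull e)
    (r : ℝ≥0∞) (hr0 : 0 < r) (hrtop : r ≠ ⊤) (x y : S)
    (h : ∀ Λ : S → ℝ≥0∞, IsCuFunctional Λ → Λ x + r * Λ e ≤ Λ y) :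
    IsFull y := by
  classical
  -- monotone sequences n • y and n • e
  have hmy : Monotone (fun n : ℕ => n • y) := by
    apply monotone_nat_of_le_succ
    intro n
    rw [succ_nsmul]
    exact le_add_of_nonneg_right (CuSemigroup.zero_le y)
  obtain ⟨w, hw⟩ := CuSemigroup.O1 (fun n : ℕ => n • y) hmy
  -- w + w = w
  have hww : w + w = w := by
    have h4 := CuSemigroup.O4 (fun n : ℕ => n • y) (fun n : ℕ => n • y) hmy hmy w w hw hw
    have h2 : IsLUB (Set.range fun n : ℕ => n • y + n • y) w := by
      constructor
      · rintro _ ⟨n, rfl⟩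
        show n • y + n • y ≤ w
        rw [← add_nsmul]
        exact hw.1 ⟨n + n, rfl⟩
      · intro u hu
        apply hw.2
        rintro _ ⟨n, rfl⟩
        calc (n : ℕ) • y ≤ n • y + n • y := le_add_of_nonneg_right (CuSemigroup.zero_le _)
          _ ≤ u := hu ⟨n, rfl⟩
    exact h4.unique h2
  -- the indicator functional
  set Λ : S → ℝ≥0∞ := fun s => if s ≤ w then 0 else ⊤ with hΛdef
  have hle : ∀ s : S, Λ s = 0 ↔ s ≤ w := by
    intro s
    simp only [hΛdef]
    split <;> simp_all
  have hΛ : IsCuFunctional Λ := by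
    constructor
    · exact (hle 0).2 (CuSemigroup.zero_le w)
    · intro a b
      by_cases ha : a ≤ w
      · by_cases hb : b ≤ w
        · have : a + b ≤ w := by
            calc a + b ≤ w + w := add_le_add ha hb
              _ = w := hww
          simp only [hΛdef, if_pos ha, if_pos hb, if_pos this, add_zero]
        · have : ¬ a + b ≤ w := fun hab => hb (le_trans (le_add_of_nonneg_left (CuSemigroup.zero_le a)) hab)
          simp only [hΛdef, if_pos ha, if_neg hb, if_neg this, zero_add]
      · have : ¬ a + b ≤ w := fun hab => ha (le_trans (le_add_of_nonneg_right (CuSemigroup.zero_le b)) hab)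
        simp only [hΛdef, if_neg ha, if_neg this, top_add]
    · intro a b hab
      by_cases hb : b ≤ w
      · simp only [hΛdef, if_pos (le_trans hab hb), if_pos hb, le_refl]
      · simp only [hΛdef, if_neg hb]; exact le_top
    · intro f hf s hs
      by_cases hsw : s ≤ w
      · have h0 : ∀ n, Λ (f n) = 0 := fun n => (hle _).2 (le_trans (hs.1 ⟨n, rfl⟩) hsw)
        simp only [hΛdef, if_pos hsw] at *
        simp [h0]
      · have : ∃ n, ¬ f n ≤ w := by
          by_contra hc
          push_neg at hc
          exact hsw (hs.2 (by rintro _ ⟨n, rfl⟩; exact hc n))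
        obtain ⟨n, hn⟩ := this
        simp only [hΛdef, if_neg hsw]
        refine le_antisymm ?_ le_top
        calc (⊤ : ℝ≥0∞) = (if f n ≤ w then (0:ℝ≥0∞) else ⊤) := (if_neg hn).symm
          _ ≤ ⨆ m, (if f m ≤ w then (0:ℝ≥0∞) else ⊤) := le_iSup (fun m => if f m ≤ w then (0:ℝ≥0∞) else ⊤) n
  -- apply h
  have hy0 : Λ y = 0 := (hle y).2 (by simpa using hw.1 ⟨1, rfl⟩)
  have hsum := h Λ hΛ
  rw [hy0, nonpos_iff_eq_zero, add_eq_zero] at hsum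
  have hre : Λ e = 0 := by
    rcases mul_eq_zero.1 hsum.2 with h1 | h1
    · exact absurd h1 hr0.ne'
    · exact h1
  have hew : e ≤ w := (hle e).1 hre
  -- n • e ≤ w
  have hnew : ∀ n : ℕ, n • e ≤ w := by
    intro n
    induction n with
    | zero => simpa using CuSemigroup.zero_le w
    | succ n ih =>
      rw [succ_nsmul]
      calc n • e + e ≤ w + w := add_le_add ih hew
        _ = w := hww
  -- conclude
  intro s hs z
  have hsw : s = w := hs.unique hw
  obtain ⟨t, ht⟩ := CuSemigroup.O1 (fun n : ℕ => n • e) (by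
    apply monotone_nat_of_le_succ
    intro n
    rw [succ_nsmul]
    exact le_add_of_nonneg_right (CuSemigroup.zero_le e))
  have hzt : z ≤ t := he t ht z
  have htw : t ≤ w := ht.2 (by rintro _ ⟨n, rfl⟩; exact hnew n)
  rw [hsw]
  exact le_trans hzt htw
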